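/- For $k \in \{1,2\}$ and any measure $\nu$ on $\mathbb{R}^d$ with $\nu(\{0\})=0$ and $\int(1\wedge|x|^k)\nu(dx)<\infty$, one has $\mathcal{A}_k(\nu)(B) = \int_0^1 \nu^{(k/2)}(u^{-1}B)\,\frac{2}{\pi}(1-u^2)^{-1/2}\,du$ for every Borel set $B \subseteq \mathbb{R}^d$. In particular, $\mathcal{A}_2$ is an Upsilon transformation with dilation measure $\tau(du) = \frac{2}{\pi}(1-u^2)^{-1/2}1_{(0,1)}(u)\,du$. -/

import Mathlib

open MeasureTheory Real Set ENNReal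

variable {d : ℕ}

/-- The arcsine transformation `𝒜ₖ` of a measure on `ℝᵈ` (for `k = 1, 2`):
`𝒜ₖ(ν)(B) = ∫ ν(dx) ∫₀^{|x|^{k/2}} (2/π)(|x|^k - r²)^{-1/2} 1_B(r x/|x|) dr`. -/
noncomputable def arcsineT (k : ℝ) (ν : Measure (EuclideanSpace ℝ (Fin d))) :
    Measure (EuclideanSpace ℝ (Fin d)) :=
  (ν.restrict {(0 : EuclideanSpace ℝ (Fin d))}ᶜ).bind fun x =>
    Measure.map (fun r : ℝ => (r / ‖x‖) • x)
      ((volume.restrict (Set.Ioo (0 : ℝ) (‖x‖ ^ (k / 2)))).withDensity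
        (fun r => ENNReal.ofReal (2 / Real.pi * (‖x‖ ^ k - r ^ 2) ^ (-(1/2) : ℝ))))

/-- The `(p)`-transformation of a measure on `ℝᵈ`: pushforward under `x ↦ |x|^{p-1} x`. -/
noncomputable def pTrans (p : ℝ) (ν : Measure (EuclideanSpace ℝ (Fin d))) :
    Measure (EuclideanSpace ℝ (Fin d)) :=
  Measure.map (fun x => ‖x‖ ^ (p - 1) • x) (ν.restrict {(0 : EuclideanSpace ℝ (Fin d))}ᶜ)

section Aux

lemma map_withDensity_comp {α β : Type*} [MeasurableSpace α] [MeasurableSpace β]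
    {e : α → β} (he : Measurable e) (μ : Measure α) {h : β → ℝ≥0∞} (hh : Measurable h) :
    Measure.map e (μ.withDensity (h ∘ e)) = (Measure.map e μ).withDensity h := by
  ext s hs
  rw [Measure.map_apply he hs, withDensity_apply _ (he hs), withDensity_apply _ hs,
    setLIntegral_map hs hh he]
  rfl

lemma measurable_rpow_const (p : ℝ) : Measurable fun t : ℝ => t ^ p :=
  measurable_of_continuousOn_compl_singleton 0
    (ContinuousOn.rpow_const continuousOn_id (fun _ ht => Or.inl ht))

lemma measurable_w : Measurable fun u : ℝ =>
    ENNReal.ofReal (2 / Real.pi * (1 - u ^ 2) ^ (-(1/2) : ℝ)) :=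
  (measurable_const.mul ((measurable_rpow_const _).comp
    (measurable_const.sub (measurable_id.pow_const 2)))).ennreal_ofReal

lemma measurable_rho (x : EuclideanSpace ℝ (Fin d)) (k : ℝ) : Measurable fun r : ℝ =>
    ENNReal.ofReal (2 / Real.pi * (‖x‖ ^ k - r ^ 2) ^ (-(1/2) : ℝ)) :=
  (measurable_const.mul ((measurable_rpow_const _).comp
    (measurable_const.sub (measurable_id.pow_const 2)))).ennreal_ofReal

lemma claimA (k : ℝ) (x : EuclideanSpace ℝ (Fin d)) (hx : x ≠ 0) :
    Measure.map (fun r : ℝ => (r / ‖x‖) • x)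
      ((volume.restrict (Set.Ioo (0 : ℝ) (‖x‖ ^ (k / 2)))).withDensity
        (fun r => ENNReal.ofReal (2 / Real.pi * (‖x‖ ^ k - r ^ 2) ^ (-(1/2) : ℝ)))) =
    Measure.map (fun u : ℝ => u • (‖x‖ ^ (k / 2 - 1) • x))
      ((volume.restrict (Set.Ioo (0 : ℝ) 1)).withDensity
        (fun u => ENNReal.ofReal (2 / Real.pi * (1 - u ^ 2) ^ (-(1/2) : ℝ)))) := by
  have hx0 : (0:ℝ) < ‖x‖ := norm_pos_iff.mpr hx
  set c : ℝ := ‖x‖ ^ (k / 2) with hc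
  have hcpos : 0 < c := Real.rpow_pos_of_pos hx0 _
  have hc2 : c ^ 2 = ‖x‖ ^ k := by
    rw [hc, ← Real.rpow_natCast (‖x‖ ^ (k/2)) 2, ← Real.rpow_mul hx0.le]
    norm_num
  have hmc : Measurable fun u : ℝ => c * u := measurable_id.const_mul c
  have hρ := measurable_rho x k
  have hsrc :
      (volume.restrict (Set.Ioo (0 : ℝ) c)).withDensity
        (fun r => ENNReal.ofReal (2 / Real.pi * (‖x‖ ^ k - r ^ 2) ^ (-(1/2) : ℝ))) =
      Measure.map (fun u : ℝ => c * u)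
        ((volume.restrict (Set.Ioo (0 : ℝ) 1)).withDensity
          (fun u => ENNReal.ofReal (2 / Real.pi * (1 - u ^ 2) ^ (-(1/2) : ℝ)))) := by
    have hdens : (fun u : ℝ => ENNReal.ofReal (2 / Real.pi * (1 - u ^ 2) ^ (-(1/2) : ℝ)))
        =ᵐ[volume.restrict (Set.Ioo (0:ℝ) 1)]
        (ENNReal.ofReal c •
          ((fun r : ℝ => ENNReal.ofReal (2 / Real.pi * (‖x‖ ^ k - r ^ 2) ^ (-(1/2) : ℝ)))
            ∘ (fun u : ℝ => c * u))) := by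
      filter_upwards [ae_restrict_mem measurableSet_Ioo] with u hu
      simp only [Pi.smul_apply, Function.comp_apply, smul_eq_mul]
      have h1u : (0:ℝ) < 1 - u ^ 2 := by nlinarith [hu.1, hu.2]
      have hkey : ‖x‖ ^ k - (c * u) ^ 2 = c ^ 2 * (1 - u ^ 2) := by rw [← hc2]; ring
      have hcinv : ((c:ℝ) ^ 2) ^ (-(1/2) : ℝ) = c⁻¹ := by
        rw [← Real.rpow_natCast c 2, ← Real.rpow_mul hcpos.le]
        norm_num
        rw [Real.rpow_neg_one]
      rw [hkey, Real.mul_rpow (by positivity) h1u.le, hcinv,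
        ← ENNReal.ofReal_mul hcpos.le]
      congr 1
      field_simp
    rw [withDensity_congr_ae hdens, withDensity_smul' _ _ ENNReal.ofReal_ne_top,
      Measure.map_smul, map_withDensity_comp hmc _ hρ]
    have hmap : Measure.map (fun u : ℝ => c * u) (volume.restrict (Set.Ioo (0:ℝ) 1))
        = ENNReal.ofReal c⁻¹ • volume.restrict (Set.Ioo (0:ℝ) c) := by
      have hpre : Set.Ioo (0:ℝ) 1 = (fun u : ℝ => c * u) ⁻¹' (Set.Ioo 0 c) := by
        rw [Set.preimage_const_mul_Ioo₀ _ _ hcpos]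
        simp [div_self hcpos.ne']
      rw [hpre, ← Measure.restrict_map hmc measurableSet_Ioo,
        Real.map_volume_mul_left hcpos.ne']
      rw [Measure.restrict_smul]
      congr 1
      rw [abs_of_pos (inv_pos.mpr hcpos)]
    rw [hmap, withDensity_smul_measure, smul_smul, ← ENNReal.ofReal_mul hcpos.le,
      mul_inv_cancel₀ hcpos.ne', ENNReal.ofReal_one, one_smul]
  have hφ : Measurable fun r : ℝ => (r / ‖x‖) • x :=
    (measurable_id.div_const _).smul_const x
  rw [hsrc, Measure.map_map hφ hmc]
  congr 1
  funext u
  show ((c * u) / ‖x‖) • x = u • (‖x‖ ^ (k / 2 - 1) • x)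
  rw [smul_smul]
  congr 1
  rw [Real.rpow_sub hx0, Real.rpow_one]
  field_simp
  ring

end Aux

section Aux2

lemma measurable_kernel' (k : ℝ) :
    Measurable (fun x : EuclideanSpace ℝ (Fin d) =>
      Measure.map (fun u : ℝ => u • (‖x‖ ^ (k / 2 - 1) • x))
        ((volume.restrict (Set.Ioo (0 : ℝ) 1)).withDensity
          (fun u => ENNReal.ofReal (2 / Real.pi * (1 - u ^ 2) ^ (-(1/2) : ℝ))))) := by
  rw [Measure.measurable_measure]
  intro s hs
  have hg : Measurable fun x : EuclideanSpace ℝ (Fin d) => ‖x‖ ^ (k/2-1) • x :=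
    ((measurable_rpow_const _).comp measurable_norm).smul measurable_id
  have heq : ∀ x : EuclideanSpace ℝ (Fin d),
      Measure.map (fun u : ℝ => u • (‖x‖ ^ (k / 2 - 1) • x))
        ((volume.restrict (Set.Ioo (0 : ℝ) 1)).withDensity
          (fun u => ENNReal.ofReal (2 / Real.pi * (1 - u ^ 2) ^ (-(1/2) : ℝ)))) s
        = ((volume.restrict (Set.Ioo (0 : ℝ) 1)).withDensity
          (fun u => ENNReal.ofReal (2 / Real.pi * (1 - u ^ 2) ^ (-(1/2) : ℝ))))
          (Prod.mk x ⁻¹' ((fun p : (EuclideanSpace ℝ (Fin d)) × ℝ =>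
            p.2 • (‖p.1‖ ^ (k/2-1) • p.1)) ⁻¹' s)) := fun x => by
    have hm : Measurable fun u : ℝ => u • (‖x‖ ^ (k / 2 - 1) • x) := measurable_id.smul_const _
    rw [Measure.map_apply hm hs]; rfl
  simp_rw [heq]
  exact measurable_measure_prodMk_left ((measurable_snd.smul (hg.comp measurable_fst)) hs)

lemma sigmaFinite_restrict (k : ℝ) (hk : 0 < k) (ν : Measure (EuclideanSpace ℝ (Fin d)))
    (hL : ∫⁻ x, ENNReal.ofReal (min 1 (‖x‖ ^ k)) ∂ν < ⊤) :
    SigmaFinite (ν.restrict {(0 : EuclideanSpace ℝ (Fin d))}ᶜ) := by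
  have key : ∀ ε : ℝ, 0 < ε → ν {x : EuclideanSpace ℝ (Fin d) | ε < ‖x‖} < ⊤ := by
    intro ε hε
    set A := {x : EuclideanSpace ℝ (Fin d) | ε < ‖x‖} with hA
    have hAm : MeasurableSet A := measurableSet_lt measurable_const measurable_norm
    have hm : (0:ℝ) < min 1 (ε ^ k) := lt_min one_pos (Real.rpow_pos_of_pos hε k)
    have hb : ENNReal.ofReal (min 1 (ε ^ k)) * ν A
        ≤ ∫⁻ x, ENNReal.ofReal (min 1 (‖x‖ ^ k)) ∂ν := by
      calc ENNReal.ofReal (min 1 (ε ^ k)) * ν A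
          = ∫⁻ _ in A, ENNReal.ofReal (min 1 (ε ^ k)) ∂ν := (setLIntegral_const A _).symm
        _ ≤ ∫⁻ x in A, ENNReal.ofReal (min 1 (‖x‖ ^ k)) ∂ν := by
            refine setLIntegral_mono' hAm fun x hx => ?_
            exact ENNReal.ofReal_le_ofReal (min_le_min le_rfl
              (Real.rpow_le_rpow hε.le (le_of_lt hx) hk.le))
        _ ≤ _ := setLIntegral_le_lintegral _ _
    by_contra htop
    rw [not_lt, top_le_iff] at htop
    rw [htop, ENNReal.mul_top ((ENNReal.ofReal_pos.mpr hm).ne')] at hb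
    exact absurd (hb.trans_lt hL) (lt_irrefl ⊤)
  refine Measure.sigmaFinite_of_countable (Set.countable_range
    (fun n : ℕ => {x : EuclideanSpace ℝ (Fin d) | 1/(n+1 : ℝ) < ‖x‖} ∪ {0})) ?_ ?_
  · rintro s ⟨n, rfl⟩
    have hle : ν.restrict {(0 : EuclideanSpace ℝ (Fin d))}ᶜ
        ({x : EuclideanSpace ℝ (Fin d) | 1/(n+1:ℝ) < ‖x‖} ∪ {0})
        ≤ ν {x : EuclideanSpace ℝ (Fin d) | 1/(n+1:ℝ) < ‖x‖} := by
      rw [Measure.restrict_apply' (measurableSet_singleton 0).compl]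
      refine measure_mono fun y hy => ?_
      rcases hy.1 with h | h
      · exact h
      · exact absurd h hy.2
    exact hle.trans_lt (key _ (by positivity))
  · rw [Set.sUnion_range]
    ext x
    simp only [Set.mem_iUnion, Set.mem_univ, iff_true, Set.mem_union, Set.mem_setOf_eq,
      Set.mem_singleton_iff]
    by_cases hx : x = 0
    · exact ⟨0, Or.inr hx⟩
    · obtain ⟨n, hn⟩ := exists_nat_one_div_lt (norm_pos_iff.mpr hx)
      exact ⟨n, Or.inl hn⟩

end Aux2

/-- `𝒜ₖ(ν)(B) = ∫₀¹ ν^{(k/2)}(u⁻¹ B) (2/π)(1-u²)^{-1/2} du`; in particular `𝒜₂` is an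
Upsilon transformation with dilation measure `(2/π)(1-u²)^{-1/2} 1_{(0,1)}(u) du`. -/
theorem arcsineT_as_upsilon (k : ℝ) (hk : k = 1 ∨ k = 2)
    (ν : Measure (EuclideanSpace ℝ (Fin d))) (hν : ν {0} = 0)
    (hL : ∫⁻ x, ENNReal.ofReal (min 1 (‖x‖ ^ k)) ∂ν < ⊤) :
    ∀ B : Set (EuclideanSpace ℝ (Fin d)), MeasurableSet B →
      arcsineT k ν B =
        ∫⁻ u in Set.Ioo (0 : ℝ) 1,
          pTrans (k / 2) ν {x | u • x ∈ B} *
            ENNReal.ofReal (2 / Real.pi * (1 - u ^ 2) ^ (-(1/2) : ℝ)) := by 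
  intro B hB
  have hk' : (0:ℝ) < k := by rcases hk with h | h <;> rw [h] <;> norm_num
  haveI : SigmaFinite (ν.restrict {(0 : EuclideanSpace ℝ (Fin d))}ᶜ) :=
    sigmaFinite_restrict k hk' ν hL
  set ν' := ν.restrict {(0 : EuclideanSpace ℝ (Fin d))}ᶜ with hν'
  set w : ℝ → ℝ≥0∞ := fun u => ENNReal.ofReal (2 / Real.pi * (1 - u ^ 2) ^ (-(1/2) : ℝ)) with hw
  set τ : Measure ℝ := (volume.restrict (Set.Ioo (0:ℝ) 1)).withDensity w with hτ
  set g : EuclideanSpace ℝ (Fin d) → EuclideanSpace ℝ (Fin d) :=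
    fun x => ‖x‖ ^ (k/2 - 1) • x with hgdef
  have hg : Measurable g := ((measurable_rpow_const _).comp measurable_norm).smul measurable_id
  have hae : ∀ᵐ x ∂ν', x ≠ (0 : EuclideanSpace ℝ (Fin d)) := by
    rw [ae_iff]
    have h0 : {x : EuclideanSpace ℝ (Fin d) | ¬ x ≠ 0} = {0} := by ext y; simp
    rw [h0, hν', Measure.restrict_apply (measurableSet_singleton 0)]
    simp
  have hff' : (fun x : EuclideanSpace ℝ (Fin d) => Measure.map (fun r : ℝ => (r / ‖x‖) • x)
      ((volume.restrict (Set.Ioo (0 : ℝ) (‖x‖ ^ (k / 2)))).withDensity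
        (fun r => ENNReal.ofReal (2 / Real.pi * (‖x‖ ^ k - r ^ 2) ^ (-(1/2) : ℝ)))))
      =ᵐ[ν'] (fun x => Measure.map (fun u : ℝ => u • g x) τ) := by
    filter_upwards [hae] with x hx
    exact claimA k x hx
  have hmeasf' : Measurable fun x : EuclideanSpace ℝ (Fin d) =>
      Measure.map (fun u : ℝ => u • g x) τ := measurable_kernel' k
  have hbind : ∀ (f₁ f₂ : EuclideanSpace ℝ (Fin d) → Measure (EuclideanSpace ℝ (Fin d))),
      f₁ =ᵐ[ν'] f₂ → ν'.bind f₁ = ν'.bind f₂ := by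
    intro f₁ f₂ h
    unfold Measure.bind
    rw [Measure.map_congr h]
  rw [show arcsineT k ν = ν'.bind (fun x => Measure.map (fun u : ℝ => u • g x) τ) from
    hbind _ _ hff']
  rw [Measure.bind_apply hB hmeasf'.aemeasurable]
  have hsmul : ∀ y : EuclideanSpace ℝ (Fin d), Measurable fun u : ℝ => u • y :=
    fun y => measurable_id.smul_const y
  have hf'B : ∀ x : EuclideanSpace ℝ (Fin d),
      Measure.map (fun u : ℝ => u • g x) τ B
        = ∫⁻ u in Set.Ioo (0:ℝ) 1,
            B.indicator (fun _ => (1:ℝ≥0∞)) (u • g x) * w u ∂volume := by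
    intro x
    rw [Measure.map_apply (hsmul (g x)) hB, hτ, withDensity_apply _ ((hsmul (g x)) hB),
      ← lintegral_indicator ((hsmul (g x)) hB)]
    refine lintegral_congr fun u => ?_
    by_cases hmem : u • g x ∈ B
    · simp [Set.indicator_of_mem, hmem, Set.mem_preimage]
    · simp [Set.indicator_of_notMem, hmem, Set.mem_preimage]
  simp_rw [hf'B]
  have hF : Measurable (Function.uncurry fun (x : EuclideanSpace ℝ (Fin d)) (u : ℝ) =>
      B.indicator (fun _ => (1:ℝ≥0∞)) (u • g x) * w u) := by
    have h1 : Measurable fun p : (EuclideanSpace ℝ (Fin d)) × ℝ => p.2 • g p.1 :=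
      measurable_snd.smul (hg.comp measurable_fst)
    have heq : (Function.uncurry fun (x : EuclideanSpace ℝ (Fin d)) (u : ℝ) =>
        B.indicator (fun _ => (1:ℝ≥0∞)) (u • g x) * w u)
        = fun p : (EuclideanSpace ℝ (Fin d)) × ℝ =>
          ((fun p : (EuclideanSpace ℝ (Fin d)) × ℝ => p.2 • g p.1) ⁻¹' B).indicator
            (fun _ => (1:ℝ≥0∞)) p * w p.2 := by
      funext p
      rw [Function.uncurry]
      by_cases hmem : p.2 • g p.1 ∈ B
      · simp [Set.indicator_of_mem, hmem, Set.mem_preimage]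
      · simp [Set.indicator_of_notMem, hmem, Set.mem_preimage]
    rw [heq]
    exact (measurable_const.indicator (h1 hB)).mul (measurable_w.comp measurable_snd)
  rw [lintegral_lintegral_swap hF.aemeasurable]
  refine lintegral_congr fun u => ?_
  have hBu : MeasurableSet ((fun y : EuclideanSpace ℝ (Fin d) => u • y) ⁻¹' B) :=
    (measurable_id.const_smul u) hB
  have hind : (fun x : EuclideanSpace ℝ (Fin d) => B.indicator (fun _ => (1:ℝ≥0∞)) (u • g x))
      = ((fun x : EuclideanSpace ℝ (Fin d) => u • g x) ⁻¹' B).indicator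
          (fun _ => (1:ℝ≥0∞)) := by
    funext x
    by_cases hmem : u • g x ∈ B
    · simp [Set.indicator_of_mem, hmem, Set.mem_preimage]
    · simp [Set.indicator_of_notMem, hmem, Set.mem_preimage]
  have hmx : Measurable fun x : EuclideanSpace ℝ (Fin d) =>
      B.indicator (fun _ => (1:ℝ≥0∞)) (u • g x) := by
    rw [hind]
    exact measurable_const.indicator (((measurable_id.const_smul u).comp hg) hB)
  rw [lintegral_mul_const _ hmx]
  congr 1
  rw [hind]
  have hpre : MeasurableSet ((fun x : EuclideanSpace ℝ (Fin d) => u • g x) ⁻¹' B) :=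
    ((measurable_id.const_smul u).comp hg) hB
  have hg2 : Measurable fun x : EuclideanSpace ℝ (Fin d) => ‖x‖ ^ (k / 2 - 1) • x :=
    ((measurable_rpow_const _).comp measurable_norm).smul measurable_id
  calc lintegral ν' (((fun x : EuclideanSpace ℝ (Fin d) => u • g x) ⁻¹' B).indicator
        fun _ => (1:ℝ≥0∞))
      = ν' ((fun x : EuclideanSpace ℝ (Fin d) => u • g x) ⁻¹' B) :=
        lintegral_indicator_one hpre
    _ = pTrans (k / 2) ν {x | u • x ∈ B} := by
        rw [pTrans, Measure.map_apply hg2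
          (show MeasurableSet {x : EuclideanSpace ℝ (Fin d) | u • x ∈ B} from hBu)]
        rfl
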